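/- For a finite distributive lattice D, the order dimension of D equals the width of the poset of nonzero join-irreducible elements of D. -/

import Mathlib

/-- The order dimension of a poset: the least `n` such that it order-embeds into a
product of `n` chains. -/
noncomputable def orderDim (P : Type) [Preorder P] : ℕ :=
  sInf {n : ℕ | Nonempty (P ↪o (Fin n → ℕ))}

/-- The width of a poset: the supremum of sizes of (finite) antichains. -/
noncomputable def posetWidth (P : Type) [Preorder P] : ℕ :=
  sSup {k : ℕ | ∃ s : Finset P, IsAntichain (· ≤ ·) (↑s : Set P) ∧ s.card = k}

open Classical in
/-- The largest size of an antichain contained in the finset `s`. -/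
noncomputable def widthF {P : Type} [PartialOrder P] (s : Finset P) : ℕ :=
  s.powerset.sup fun t => if IsAntichain (· ≤ ·) (t : Set P) then t.card else 0

section Width
variable {P : Type} [PartialOrder P]

lemma card_le_widthF {s t : Finset P} (hts : t ⊆ s)
    (ht : IsAntichain (· ≤ ·) (t : Set P)) : t.card ≤ widthF s := by
  classical
  have := Finset.le_sup (f := fun t : Finset P =>
      if IsAntichain (· ≤ ·) (t : Set P) then t.card else 0)
    (Finset.mem_powerset.2 hts)
  simp only [if_pos ht] at this
  exact this

lemma exists_antichain_widthF (s : Finset P) :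
    ∃ t, t ⊆ s ∧ IsAntichain (· ≤ ·) (t : Set P) ∧ t.card = widthF s := by
  classical
  obtain ⟨t, ht, h⟩ := Finset.exists_mem_eq_sup s.powerset ⟨∅, by simp⟩
    fun t : Finset P => if IsAntichain (· ≤ ·) (t : Set P) then t.card else 0
  by_cases hac : IsAntichain (· ≤ ·) (t : Set P)
  · exact ⟨t, Finset.mem_powerset.1 ht, hac, by rw [widthF, h, if_pos hac]⟩
  · refine ⟨∅, Finset.empty_subset _, by simp [IsAntichain], ?_⟩
    rw [widthF, h, if_neg hac]; simp

lemma widthF_le {s : Finset P} {n : ℕ}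
    (h : ∀ t, t ⊆ s → IsAntichain (· ≤ ·) (t : Set P) → t.card ≤ n) :
    widthF s ≤ n := by
  classical
  refine Finset.sup_le fun t ht => ?_
  by_cases hac : IsAntichain (· ≤ ·) (t : Set P)
  · rw [if_pos hac]; exact h t (Finset.mem_powerset.1 ht) hac
  · rw [if_neg hac]; exact Nat.zero_le _

end Width

section Chains
variable {P : Type} [PartialOrder P]

/-- An antichain covered by `n` chains has at most `n` elements. -/
lemma antichain_card_le_of_chains {t : Finset P} {n : ℕ} {f : Fin n → Finset P}
    (hchain : ∀ i, IsChain (· ≤ ·) ((f i : Set P)))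
    (hcover : ∀ x ∈ t, ∃ i, x ∈ f i)
    (ht : IsAntichain (· ≤ ·) (t : Set P)) : t.card ≤ n := by
  classical
  by_contra hlt
  push_neg at hlt
  have hne : t.Nonempty := Finset.card_pos.1 (lt_of_le_of_lt (Nat.zero_le _) hlt)
  have htot : ∀ x : P, ∃ i : Fin n, x ∈ t → x ∈ f i := by
    intro x
    by_cases hx : x ∈ t
    · obtain ⟨i, hi⟩ := hcover x hx; exact ⟨i, fun _ => hi⟩
    · obtain ⟨x0, hx0⟩ := hne
      obtain ⟨i, _⟩ := hcover x0 hx0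
      exact ⟨i, fun h => absurd h hx⟩
  choose g hg using htot
  obtain ⟨x, hx, y, hy, hxy, hgxy⟩ :=
    Finset.exists_ne_map_eq_of_card_lt_of_maps_to (t := (Finset.univ : Finset (Fin n)))
      (by simpa using hlt) (fun x _ => Finset.mem_univ (g x))
  have hmx : x ∈ (f (g x) : Set P) := hg x hx
  have hmy : y ∈ (f (g x) : Set P) := by rw [hgxy]; exact hg y hy
  rcases hchain (g x) hmx hmy hxy with h | h
  · exact ht hx hy hxy h
  · exact ht hy hx (Ne.symm hxy) h

/-- A maximum-size antichain meets every chain of a chain cover. -/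
lemma antichain_meets_chain {t : Finset P} {n : ℕ} {f : Fin n → Finset P}
    (hchain : ∀ i, IsChain (· ≤ ·) ((f i : Set P)))
    (hcover : ∀ x ∈ t, ∃ i, x ∈ f i)
    (ht : IsAntichain (· ≤ ·) (t : Set P)) (hcard : t.card = n) (i : Fin n) :
    ∃ x ∈ t, x ∈ f i := by
  classical
  -- map each element of t to a chain containing it; it's injective, so surjective
  have htot : ∀ x ∈ t, ∃ j : Fin n, x ∈ f j := hcover
  choose g hg using htot
  have hinj : ∀ x₁ x₂ hx₁ hx₂, g x₁ hx₁ = g x₂ hx₂ → x₁ = x₂ := by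
    intro x₁ x₂ hx₁ hx₂ he
    by_contra hne
    have hm1 : x₁ ∈ (f (g x₁ hx₁) : Set P) := hg x₁ hx₁
    have hm2 : x₂ ∈ (f (g x₁ hx₁) : Set P) := by rw [he]; exact hg x₂ hx₂
    rcases hchain (g x₁ hx₁) hm1 hm2 hne with h | h
    · exact ht hx₁ hx₂ hne h
    · exact ht hx₂ hx₁ (Ne.symm hne) h
  obtain ⟨x, hx, he⟩ := Finset.surj_on_of_inj_on_of_card_le g (fun a ha => Finset.mem_univ _)
    hinj (by simp [hcard]) i (Finset.mem_univ i)
  exact ⟨x, hx, by rw [he]; exact hg x hx⟩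

end Chains

lemma Set.Finite.exists_maximal_wrt {α β : Type*} [PartialOrder β] (f : α → β) (s : Set α)
    (h : s.Finite) (hs : s.Nonempty) : ∃ a ∈ s, ∀ a' ∈ s, f a ≤ f a' → f a = f a' := by
  obtain ⟨a, ha, hm⟩ := h.exists_maximalFor f s hs
  exact ⟨a, ha, fun a' ha' hle => le_antisymm hle (hm ha' hle)⟩

section Dilworth
variable {P : Type} [PartialOrder P]

/-- **Dilworth's theorem** (finite version): a finite poset can be partitioned into
`widthF s` chains. -/
theorem dilworth (s : Finset P) : ∃ f : Fin (widthF s) → Finset P,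
    (∀ i, f i ⊆ s) ∧ (∀ i, IsChain (· ≤ ·) (f i : Set P)) ∧
    (∀ i j, i ≠ j → Disjoint (f i) (f j)) ∧ (∀ x ∈ s, ∃ i, x ∈ f i) := by
  classical
  induction s using Finset.strongInduction with
  | _ s ih =>
  rcases s.eq_empty_or_nonempty with rfl | hne
  · exact ⟨fun _ => ∅, fun i => Finset.Subset.refl _,
      fun i => by simp [IsChain, Set.pairwise_empty],
      fun i j _ => by simp, fun x hx => absurd hx (by simp)⟩
  -- pick a maximal element `a` of `s`
  obtain ⟨a, ha, hamax⟩ := (s : Set P).toFinite.exists_maximal_wrt id _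
    (by exact_mod_cast hne)
  simp only [id] at hamax
  replace ha : a ∈ s := ha
  obtain ⟨f', hf'sub, hf'chain, hf'disj, hf'cov⟩ := ih (s.erase a) (Finset.erase_ssubset ha)
  -- a maximum antichain of `s.erase a`
  obtain ⟨t0, ht0sub, ht0ac, ht0card⟩ := exists_antichain_widthF (s.erase a)
  -- `b i` : the greatest element of chain `f' i` occurring in some maximum antichain
  have hbex : ∀ i : Fin (widthF (s.erase a)), ∃ c, (c ∈ f' i ∧
      (∃ t, t ⊆ s.erase a ∧ IsAntichain (· ≤ ·) (t : Set P) ∧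
        t.card = widthF (s.erase a) ∧ c ∈ t)) ∧
      ∀ y ∈ f' i, (∃ t, t ⊆ s.erase a ∧ IsAntichain (· ≤ ·) (t : Set P) ∧
        t.card = widthF (s.erase a) ∧ y ∈ t) → y ≤ c := by
    intro i
    obtain ⟨x, hxt, hxf⟩ := antichain_meets_chain hf'chain
      (fun x hx => hf'cov x (ht0sub hx)) ht0ac ht0card i
    have hMne : ((f' i).filter fun x => ∃ t, t ⊆ s.erase a ∧
        IsAntichain (· ≤ ·) (t : Set P) ∧ t.card = widthF (s.erase a) ∧ x ∈ t).Nonempty :=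
      ⟨x, Finset.mem_filter.2 ⟨hxf, t0, ht0sub, ht0ac, ht0card, hxt⟩⟩
    obtain ⟨c, hc, hcmax⟩ := ((((f' i).filter fun x => ∃ t, t ⊆ s.erase a ∧
        IsAntichain (· ≤ ·) (t : Set P) ∧ t.card = widthF (s.erase a) ∧ x ∈ t) :
        Finset P) : Set P).toFinite.exists_maximal_wrt id _ (by exact_mod_cast hMne)
    simp only [id] at hcmax
    replace hc := Finset.mem_filter.1 hc
    refine ⟨c, hc, fun y hyf hyw => ?_⟩
    have hy : y ∈ ((f' i).filter fun x => ∃ t, t ⊆ s.erase a ∧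
        IsAntichain (· ≤ ·) (t : Set P) ∧ t.card = widthF (s.erase a) ∧ x ∈ t) :=
      Finset.mem_filter.2 ⟨hyf, hyw⟩
    rcases eq_or_ne y c with rfl | hyc
    · exact le_rfl
    rcases hf'chain i hc.1 hyf (fun h => hyc (h.symm)) with h | h
    · exact le_of_eq (hcmax y hy h).symm
    · exact h
  choose b hbmem hbmax using hbex
  have hbf : ∀ i, b i ∈ f' i := fun i => (hbmem i).1
  have hbw : ∀ i, ∃ t, t ⊆ s.erase a ∧ IsAntichain (· ≤ ·) (t : Set P) ∧
      t.card = widthF (s.erase a) ∧ b i ∈ t := fun i => (hbmem i).2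
  have hbtop : ∀ (i) (t : Finset P), t ⊆ s.erase a → IsAntichain (· ≤ ·) (t : Set P) →
      t.card = widthF (s.erase a) → ∀ x ∈ t, x ∈ f' i → x ≤ b i := by
    intro i t hts htac htc x hxt hxf
    exact hbmax i x hxf ⟨t, hts, htac, htc, hxt⟩
  -- the `b i` form an antichain
  have hbpair : ∀ i j, i ≠ j → ¬ b i ≤ b j := by
    intro i j hij hle
    obtain ⟨t, htsub, htac, htcard, hbjt⟩ := hbw j
    obtain ⟨x, hxt, hxf⟩ := antichain_meets_chain hf'chain
      (fun x hx => hf'cov x (htsub hx)) htac htcard i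
    have hxb : x ≤ b i := hbtop i t htsub htac htcard x hxt hxf
    have hxj : x ≠ b j := by
      rintro rfl
      exact (Finset.disjoint_left.1 (hf'disj i j hij)) hxf (hbf j)
    exact htac hxt hbjt hxj (hxb.trans hle)
  have hbinj : Function.Injective b := by
    intro i j hbij
    by_contra hij
    exact (Finset.disjoint_left.1 (hf'disj i j hij)) (hbf i) (hbij ▸ hbf j)
  have hBcard : (Finset.image b Finset.univ).card = widthF (s.erase a) := by
    rw [Finset.card_image_of_injective _ hbinj, Finset.card_univ, Fintype.card_fin]
  have hBsub : Finset.image b Finset.univ ⊆ s.erase a := by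
    intro x hx
    obtain ⟨i, _, rfl⟩ := Finset.mem_image.1 hx
    exact hf'sub i (hbf i)
  have hBac : IsAntichain (· ≤ ·) ((Finset.image b Finset.univ : Finset P) : Set P) := by
    rintro x hx y hy hxy hle
    obtain ⟨i, _, rfl⟩ := Finset.mem_image.1 hx
    obtain ⟨j, _, rfl⟩ := Finset.mem_image.1 hy
    exact hbpair i j (fun h => hxy (by rw [h])) hle
  by_cases hcase : ∃ i, b i ≤ a
  · -- Case B : some `b i₀ ≤ a`.  Remove the chain `K` through `b i₀` and `a`.
    obtain ⟨i0, hi0⟩ := hcase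
    have hk1 : 1 ≤ widthF (s.erase a) := Nat.pos_of_ne_zero (fun h => (h ▸ i0).elim0)
    have hKsub : insert a ((f' i0).filter fun x => x ≤ b i0) ⊆ s := by
      refine Finset.insert_subset ha ?_
      exact (Finset.filter_subset _ _).trans ((hf'sub i0).trans (Finset.erase_subset _ _))
    have hmemK : ∀ x ∈ insert a ((f' i0).filter fun x => x ≤ b i0),
        x = a ∨ (x ∈ f' i0 ∧ x ≤ b i0) := by
      intro x hx
      rcases Finset.mem_insert.1 hx with h | h
      · exact Or.inl h
      · exact Or.inr (Finset.mem_filter.1 h)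
    have hKle : ∀ x ∈ insert a ((f' i0).filter fun x => x ≤ b i0), x ≤ a := by
      intro x hx
      rcases hmemK x hx with rfl | ⟨_, hle⟩
      · exact le_rfl
      · exact hle.trans hi0
    have hKchain : IsChain (· ≤ ·)
        ((insert a ((f' i0).filter fun x => x ≤ b i0) : Finset P) : Set P) := by
      intro x hx y hy hxy
      rcases hmemK x hx with rfl | ⟨hxf, hxle⟩
      · exact Or.inr (hKle y hy)
      rcases hmemK y hy with rfl | ⟨hyf, hyle⟩
      · exact Or.inl (hKle x hx)
      exact hf'chain i0 hxf hyf hxy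
    have has2 : a ∉ s \ insert a ((f' i0).filter fun x => x ≤ b i0) := by simp
    have hs2ss : s \ insert a ((f' i0).filter fun x => x ≤ b i0) ⊂ s :=
      (Finset.ssubset_iff_of_subset Finset.sdiff_subset).2 ⟨a, ha, has2⟩
    have hs2s' : s \ insert a ((f' i0).filter fun x => x ≤ b i0) ⊆ s.erase a := by
      intro x hx
      obtain ⟨hxs, hxK⟩ := Finset.mem_sdiff.1 hx
      exact Finset.mem_erase.2 ⟨fun h => hxK (h ▸ Finset.mem_insert_self _ _), hxs⟩
    -- antichains of `s2` have size at most `width - 1`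
    have hs2w_le : widthF (s \ insert a ((f' i0).filter fun x => x ≤ b i0)) ≤
        widthF (s.erase a) - 1 := by
      refine widthF_le fun t hts htac => ?_
      have h1 : t.card ≤ widthF (s.erase a) := card_le_widthF (hts.trans hs2s') htac
      rcases lt_or_eq_of_le h1 with h | h
      · exact Nat.le_pred_of_lt h
      exfalso
      obtain ⟨x, hxt, hxf⟩ := antichain_meets_chain hf'chain
        (fun x hx => hf'cov x (hs2s' (hts hx))) htac h i0
      have hxb : x ≤ b i0 := hbtop i0 t (hts.trans hs2s') htac h x hxt hxf
      have hxK : x ∈ insert a ((f' i0).filter fun x => x ≤ b i0) :=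
        Finset.mem_insert_of_mem (Finset.mem_filter.2 ⟨hxf, hxb⟩)
      exact (Finset.mem_sdiff.1 (hts hxt)).2 hxK
    have hs2w_ge : widthF (s.erase a) - 1 ≤
        widthF (s \ insert a ((f' i0).filter fun x => x ≤ b i0)) := by
      obtain ⟨x0, hx0t, hx0f⟩ := antichain_meets_chain hf'chain
        (fun x hx => hf'cov x (ht0sub hx)) ht0ac ht0card i0
      have ht1sub : t0.erase x0 ⊆ s \ insert a ((f' i0).filter fun x => x ≤ b i0) := by
        intro y hy
        obtain ⟨hyx0, hyt⟩ := Finset.mem_erase.1 hy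
        refine Finset.mem_sdiff.2 ⟨Finset.mem_of_mem_erase (ht0sub hyt), ?_⟩
        intro hyK
        rcases hmemK y hyK with rfl | ⟨hyf, _⟩
        · exact (Finset.mem_erase.1 (ht0sub hyt)).1 rfl
        · rcases hf'chain i0 hyf hx0f hyx0 with h | h
          · exact ht0ac hyt hx0t hyx0 h
          · exact ht0ac hx0t hyt (Ne.symm hyx0) h
      have := card_le_widthF ht1sub (ht0ac.subset (by exact_mod_cast Finset.erase_subset _ _))
      rwa [Finset.card_erase_of_mem hx0t, ht0card] at this
    have hs2w : widthF (s \ insert a ((f' i0).filter fun x => x ≤ b i0)) =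
        widthF (s.erase a) - 1 := le_antisymm hs2w_le hs2w_ge
    -- width of `s` equals width of `s.erase a`
    have hw : widthF s = widthF (s.erase a) := by
      refine le_antisymm (widthF_le fun t hts htac => ?_)
        (hBcard ▸ card_le_widthF (hBsub.trans (Finset.erase_subset _ _)) hBac)
      by_cases hat : a ∈ t
      · have hets : t.erase a ⊆ s.erase a := fun y hy => Finset.mem_erase.2
          ⟨(Finset.mem_erase.1 hy).1, hts (Finset.mem_erase.1 hy).2⟩
        have heac : IsAntichain (· ≤ ·) ((t.erase a : Finset P) : Set P) :=
          htac.subset (by exact_mod_cast Finset.erase_subset _ _)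
        have h1 : (t.erase a).card ≤ widthF (s.erase a) := card_le_widthF hets heac
        rcases lt_or_eq_of_le h1 with h | h
        · have := Finset.card_erase_add_one hat
          omega
        exfalso
        obtain ⟨x, hxt, hxf⟩ := antichain_meets_chain hf'chain
          (fun x hx => hf'cov x (hets hx)) heac h i0
        have hxb : x ≤ b i0 := hbtop i0 _ hets heac h x hxt hxf
        have hxa : x ≠ a := (Finset.mem_erase.1 hxt).1
        exact htac (Finset.mem_of_mem_erase hxt) hat hxa (hxb.trans hi0)
      · exact card_le_widthF (Finset.subset_erase.2 ⟨hts, hat⟩) htac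
    -- assemble the chain partition
    have hdil := ih (s \ insert a ((f' i0).filter fun x => x ≤ b i0)) hs2ss
    rw [hs2w] at hdil
    obtain ⟨f2, hf2sub, hf2chain, hf2disj, hf2cov⟩ := hdil
    rw [hw]
    refine ⟨fun i => if h : (i : ℕ) < widthF (s.erase a) - 1 then f2 ⟨i, h⟩
      else insert a ((f' i0).filter fun x => x ≤ b i0), ?_, ?_, ?_, ?_⟩
    · intro i
      by_cases h : (i : ℕ) < widthF (s.erase a) - 1
      · simpa [h] using (hf2sub ⟨i, h⟩).trans Finset.sdiff_subset
      · simpa [h] using hKsub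
    · intro i
      by_cases h : (i : ℕ) < widthF (s.erase a) - 1
      · simpa [h] using hf2chain ⟨i, h⟩
      · simpa [h] using hKchain
    · intro i j hij
      by_cases h1 : (i : ℕ) < widthF (s.erase a) - 1 <;>
        by_cases h2 : (j : ℕ) < widthF (s.erase a) - 1
      · simp only [dif_pos h1, dif_pos h2]
        exact hf2disj ⟨i, h1⟩ ⟨j, h2⟩ fun h => hij (by have h2 := congrArg Fin.val h; exact Fin.ext h2)
      · simp only [dif_pos h1, dif_neg h2]
        exact Finset.disjoint_left.2 fun x hx hxK =>
          (Finset.mem_sdiff.1 (hf2sub ⟨i, h1⟩ hx)).2 hxK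
      · simp only [dif_neg h1, dif_pos h2]
        exact Finset.disjoint_right.2 fun x hx hxK =>
          (Finset.mem_sdiff.1 (hf2sub ⟨j, h2⟩ hx)).2 hxK
      · exfalso
        have hik : (i : ℕ) = widthF (s.erase a) - 1 := by have := i.2; omega
        have hjk : (j : ℕ) = widthF (s.erase a) - 1 := by have := j.2; omega
        exact hij (Fin.ext (hik.trans hjk.symm))
    · intro x hx
      by_cases hxK : x ∈ insert a ((f' i0).filter fun x => x ≤ b i0)
      · refine ⟨⟨widthF (s.erase a) - 1, by omega⟩, ?_⟩
        simpa [Fin.val_mk] using hxK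
      · obtain ⟨i, hi⟩ := hf2cov x (Finset.mem_sdiff.2 ⟨hx, hxK⟩)
        refine ⟨⟨i, by omega⟩, ?_⟩
        simpa [Fin.val_mk, i.2, Fin.eta] using hi
  · -- Case A : no `b i ≤ a`; then adding `a` to the `b i` gives a bigger antichain
    push_neg at hcase
    have haB : a ∉ Finset.image b Finset.univ := fun h => Finset.notMem_erase a s (hBsub h)
    have hw : widthF s = widthF (s.erase a) + 1 := by
      refine le_antisymm (widthF_le fun t hts htac => ?_) ?_
      · have hets : t.erase a ⊆ s.erase a := fun y hy => Finset.mem_erase.2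
          ⟨(Finset.mem_erase.1 hy).1, hts (Finset.mem_erase.1 hy).2⟩
        have h1 : (t.erase a).card ≤ widthF (s.erase a) := card_le_widthF hets
          (htac.subset (by exact_mod_cast Finset.erase_subset _ _))
        have h2 : t ⊆ insert a (t.erase a) := Finset.subset_insert_iff.2 le_rfl
        calc t.card ≤ (insert a (t.erase a)).card := Finset.card_le_card h2
          _ ≤ (t.erase a).card + 1 := Finset.card_insert_le _ _
          _ ≤ widthF (s.erase a) + 1 := by omega
      · have hiac : IsAntichain (· ≤ ·)
            ((insert a (Finset.image b Finset.univ) : Finset P) : Set P) := by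
          rw [Finset.coe_insert]
          refine hBac.insert (fun y hy hne hle => ?_) (fun y hy hne hle => ?_)
          · obtain ⟨i, _, rfl⟩ := Finset.mem_image.1 hy
            exact hcase i hle
          · obtain ⟨i, _, rfl⟩ := Finset.mem_image.1 hy
            have hbis : b i ∈ s.erase a := hBsub (Finset.mem_image.2 ⟨i, Finset.mem_univ i, rfl⟩)
            have : a = b i := hamax (b i) (Finset.mem_of_mem_erase hbis) hle
            exact (Finset.mem_erase.1 hbis).1 this.symm
        have hisub : insert a (Finset.image b Finset.univ) ⊆ s :=
          Finset.insert_subset ha (hBsub.trans (Finset.erase_subset _ _))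
        have := card_le_widthF hisub hiac
        rwa [Finset.card_insert_of_notMem haB, hBcard] at this
    rw [hw]
    refine ⟨fun i => if h : (i : ℕ) < widthF (s.erase a) then f' ⟨i, h⟩ else {a},
      ?_, ?_, ?_, ?_⟩
    · intro i
      by_cases h : (i : ℕ) < widthF (s.erase a)
      · simpa [h] using (hf'sub ⟨i, h⟩).trans (Finset.erase_subset _ _)
      · simpa [h] using Finset.singleton_subset_iff.2 ha
    · intro i
      by_cases h : (i : ℕ) < widthF (s.erase a)
      · simpa [h] using hf'chain ⟨i, h⟩
      · simp only [dif_neg h, Finset.coe_singleton]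
        exact Set.Subsingleton.isChain (Set.subsingleton_singleton)
    · intro i j hij
      by_cases h1 : (i : ℕ) < widthF (s.erase a) <;>
        by_cases h2 : (j : ℕ) < widthF (s.erase a)
      · simp only [dif_pos h1, dif_pos h2]
        exact hf'disj ⟨i, h1⟩ ⟨j, h2⟩ fun h => hij (by have h2 := congrArg Fin.val h; exact Fin.ext h2)
      · simp only [dif_pos h1, dif_neg h2]
        exact Finset.disjoint_singleton_right.2 fun h =>
          Finset.notMem_erase a s (hf'sub ⟨i, h1⟩ h)
      · simp only [dif_neg h1, dif_pos h2]
        exact Finset.disjoint_singleton_left.2 fun h =>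
          Finset.notMem_erase a s (hf'sub ⟨j, h2⟩ h)
      · exfalso
        have hik : (i : ℕ) = widthF (s.erase a) := by have := i.2; omega
        have hjk : (j : ℕ) = widthF (s.erase a) := by have := j.2; omega
        exact hij (Fin.ext (hik.trans hjk.symm))
    · intro x hx
      rcases eq_or_ne x a with h | hxa
      · exact ⟨⟨widthF (s.erase a), by omega⟩, by simp [h, Fin.val_mk]⟩
      · obtain ⟨i, hi⟩ := hf'cov x (Finset.mem_erase.2 ⟨hxa, hx⟩)
        exact ⟨⟨i, by omega⟩, by simpa [Fin.val_mk, i.2, Fin.eta] using hi⟩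

end Dilworth

section Distrib
variable {D : Type} [DistribLattice D] [Fintype D]

lemma le_of_forall_supIrred {x y : D}
    (h : ∀ a : D, SupIrred a → a ≤ x → a ≤ y) : x ≤ y := by
  haveI : Nonempty D := ⟨x⟩
  letI := Fintype.toOrderBot D
  obtain ⟨s, rfl, hs⟩ := exists_supIrred_decomposition x
  exact Finset.sup_le fun b hb => h b (hs hb) (Finset.le_sup (f := id) hb)

lemma exists_orderEmbedding_of_chains [Fintype {a : D // SupIrred a}] :
    Nonempty (D ↪o (Fin (widthF (Finset.univ : Finset {a : D // SupIrred a})) → ℕ)) := by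
  classical
  obtain ⟨f, hfsub, hfchain, hfdisj, hfcov⟩ :=
    dilworth (Finset.univ : Finset {a : D // SupIrred a})
  refine ⟨OrderEmbedding.ofMapLEIff
    (fun x i => ((f i).filter fun j : {a : D // SupIrred a} => (j : D) ≤ x).card) fun x y => ?_⟩
  constructor
  · intro h
    refine le_of_forall_supIrred fun a ha hax => ?_
    obtain ⟨i, hi⟩ := hfcov ⟨a, ha⟩ (Finset.mem_univ _)
    have hax' : (⟨a, ha⟩ : {a : D // SupIrred a}) ∈ (f i).filter fun j : {a : D // SupIrred a} => (j : D) ≤ x :=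
      Finset.mem_filter.2 ⟨hi, hax⟩
    have hsub : ((f i).filter fun j : {a : D // SupIrred a} => (j : D) ≤ x) ⊆ (f i).filter fun j : {a : D // SupIrred a} => (j : D) ≤ y := by
      by_contra hns
      obtain ⟨c, hcS, hcT⟩ := Finset.not_subset.1 hns
      obtain ⟨hcf, hcx⟩ := Finset.mem_filter.1 hcS
      have hTS : ((f i).filter fun j : {a : D // SupIrred a} => (j : D) ≤ y) ⊆
          ((f i).filter fun j : {a : D // SupIrred a} => (j : D) ≤ x).erase c := by
        intro d hd
        obtain ⟨hdf, hdy⟩ := Finset.mem_filter.1 hd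
        have hdc : d ≠ c := fun hh => hcT (hh ▸ hd)
        rcases hfchain i (Finset.mem_coe.2 hcf) (Finset.mem_coe.2 hdf)
            (fun hh => hdc hh.symm) with hcd | hdc'
        · exact (hcT (Finset.mem_filter.2 ⟨hcf,
            le_trans (Subtype.coe_le_coe.2 hcd) hdy⟩)).elim
        · exact Finset.mem_erase.2 ⟨hdc, Finset.mem_filter.2 ⟨hdf,
            le_trans (Subtype.coe_le_coe.2 hdc') hcx⟩⟩
      have h1 := Finset.card_le_card hTS
      have h2 := Finset.card_erase_lt_of_mem hcS
      have h3 := h i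
      simp only at h3
      omega
    exact (Finset.mem_filter.1 (hsub hax')).2
  · intro h i
    refine Finset.card_le_card fun j hj => ?_
    obtain ⟨hjf, hjx⟩ := Finset.mem_filter.1 hj
    exact Finset.mem_filter.2 ⟨hjf, hjx.trans h⟩

lemma antichain_card_le_of_embedding {n : ℕ} (g : D ↪o (Fin n → ℕ))
    {s : Finset {a : D // SupIrred a}}
    (hs : IsAntichain (· ≤ ·) (s : Set {a : D // SupIrred a})) :
    s.card ≤ n := by
  classical
  rcases s.eq_empty_or_nonempty with rfl | ⟨a0, ha0⟩
  · simp
  haveI : Nonempty D := ⟨(a0 : D)⟩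
  letI := Fintype.toOrderBot D
  have h1 : ∀ a ∈ s, ¬ ((a : D) ≤ (s.erase a).sup (fun b => (b : D))) := by
    intro a haa hle
    obtain ⟨b, hb, hab⟩ := ((supPrime_iff_supIrred.2 a.2).le_finset_sup).1 hle
    have hne : a ≠ b := fun hh => (Finset.mem_erase.1 hb).1 hh.symm
    exact hs haa (Finset.mem_of_mem_erase hb) hne (Subtype.coe_le_coe.1 hab)
  have h2 : ∀ a b : {a : D // SupIrred a}, a ∈ s → b ∈ s → a ≠ b →
      (a : D) ≤ (s.erase b).sup (fun b => (b : D)) := by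
    intro a b haa hbb hab
    exact Finset.le_sup (Finset.mem_erase.2 ⟨hab, haa⟩)
  have hex : ∀ a : {a : D // SupIrred a}, ∃ i : Fin n, a ∈ s →
      g ((s.erase a).sup (fun b => (b : D))) i < g (a : D) i := by
    intro a
    by_cases haa : a ∈ s
    · have hh : ¬ g (a : D) ≤ g ((s.erase a).sup (fun b => (b : D))) :=
        fun hle => h1 a haa (g.le_iff_le.1 hle)
      rw [Pi.le_def] at hh
      push_neg at hh
      obtain ⟨i, hi⟩ := hh
      exact ⟨i, fun _ => hi⟩
    · have hh : ¬ g (a0 : D) ≤ g ((s.erase a0).sup (fun b => (b : D))) :=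
        fun hle => h1 a0 ha0 (g.le_iff_le.1 hle)
      rw [Pi.le_def] at hh
      push_neg at hh
      obtain ⟨i, _⟩ := hh
      exact ⟨i, fun hmem => absurd hmem haa⟩
  choose t ht using hex
  have hcard : s.card ≤ (Finset.univ : Finset (Fin n)).card := by
    refine Finset.card_le_card_of_injOn t (fun a _ => Finset.mem_univ _) ?_
    intro a haa b hbb hab
    by_contra hne
    have e1 := ht a haa
    have e2 := ht b hbb
    have e3 : g (a : D) (t b) ≤ g ((s.erase b).sup (fun b => (b : D))) (t b) :=
      (g.monotone (h2 a b haa hbb hne)) (t b)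
    have e4 : g (b : D) (t a) ≤ g ((s.erase a).sup (fun b => (b : D))) (t a) :=
      (g.monotone (h2 b a hbb haa (Ne.symm hne))) (t a)
    rw [hab] at e1 e4
    omega
  simpa using hcard

end Distrib

/-- For a finite distributive lattice `D`, the order dimension of `D`
equals the width of the poset of its nonzero join-irreducible elements. -/
theorem statement8 (D : Type) [DistribLattice D] [Fintype D] :
    orderDim D = posetWidth {a : D // SupIrred a} := by
  classical
  haveI : Fintype {a : D // SupIrred a} := Fintype.ofFinite _
  have hBne : Set.Nonempty {k : ℕ | ∃ s : Finset {a : D // SupIrred a},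
      IsAntichain (· ≤ ·) (↑s : Set {a : D // SupIrred a}) ∧ s.card = k} :=
    ⟨0, ∅, by simp [IsAntichain], rfl⟩
  have hBbdd : BddAbove {k : ℕ | ∃ s : Finset {a : D // SupIrred a},
      IsAntichain (· ≤ ·) (↑s : Set {a : D // SupIrred a}) ∧ s.card = k} := by
    refine ⟨Fintype.card {a : D // SupIrred a}, ?_⟩
    rintro k ⟨s, -, rfl⟩
    exact Finset.card_le_univ s
  have hwidth : widthF (Finset.univ : Finset {a : D // SupIrred a}) =
      posetWidth {a : D // SupIrred a} := by
    rw [posetWidth]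
    apply le_antisymm
    · obtain ⟨t, -, hac, hcard⟩ := exists_antichain_widthF
        (Finset.univ : Finset {a : D // SupIrred a})
      exact hcard ▸ le_csSup hBbdd ⟨t, hac, rfl⟩
    · refine csSup_le hBne ?_
      rintro k ⟨s, hac, rfl⟩
      exact card_le_widthF (Finset.subset_univ s) hac
  have hemb : Nonempty (D ↪o (Fin (posetWidth {a : D // SupIrred a}) → ℕ)) := by
    rw [← hwidth]
    exact exists_orderEmbedding_of_chains
  rw [orderDim]
  apply le_antisymm
  · exact Nat.sInf_le hemb
  · refine le_csInf ⟨_, hemb⟩ ?_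
    rintro n ⟨g⟩
    rw [posetWidth]
    refine csSup_le hBne ?_
    rintro k ⟨s, hac, rfl⟩
    exact antichain_card_le_of_embedding g hac
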